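/- Let ([p*],[u*]) be an optimal process for the pro-rata control problem with η∈[0,1) and γ>0, and let B*(t)=Σ_{k=0}^{t} 1ᵀu*(k). If B*(t*)<F(t*) at some period t*<T−1, then no liquidity is injected after period t*: u*(t)=0 for all t with t*<t≤T−1. -/
import Mathlib


open Finset

noncomputable section

/-- The relative (pro-rata) liability matrix `A` built from the nominal liability matrix. -/
def proRata {n : ℕ} (Pbar : Matrix (Fin n) (Fin n) ℝ) : Matrix (Fin n) (Fin n) ℝ :=
  fun i j =>
    if 0 < ∑ k, Pbar i k then Pbar i j / ∑ k, Pbar i k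
    else if i = j then 1 else 0

/-- Residual liability vectors: `p̄(0) = p̄`, `p̄(t+1) = α (p̄(t) - p(t))`. -/
def resLiabVec {n : ℕ} (α : ℝ) (pbar : Fin n → ℝ)
    (p : ℕ → Fin n → ℝ) : ℕ → Fin n → ℝ
  | 0 => pbar
  | t + 1 => fun i => α * (resLiabVec α pbar p t i - p t i)

/-- Net worths: `w(0) = 0`, `w(t+1) = w(t) + c(t) + Aᵀ p(t) - p(t)`. -/
def netWorthVec {n : ℕ} (A : Matrix (Fin n) (Fin n) ℝ)
    (c p : ℕ → Fin n → ℝ) : ℕ → Fin n → ℝ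
  | 0 => fun _ => 0
  | t + 1 => fun i => netWorthVec A c p t i + c t i + (∑ j, A j i * p t j) - p t i

/-- Cumulative injected cash `B(t) = Σ_{k=0}^{t} 1ᵀ u(k)`. -/
def budget {n : ℕ} (u : ℕ → Fin n → ℝ) (t : ℕ) : ℝ :=
  ∑ k ∈ range (t + 1), ∑ i, u k i

/-- Feasibility of a process `([p],[u])` for the pro-rata control problem. -/
def FeasiblePro {n : ℕ} (T : ℕ) (α : ℝ) (pbar : Fin n → ℝ)
    (A : Matrix (Fin n) (Fin n) ℝ) (e : ℕ → Fin n → ℝ) (F : ℕ → ℝ)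
    (p u : ℕ → Fin n → ℝ) : Prop :=
  ∀ t, t < T →
    (∀ i, 0 ≤ p t i) ∧ (∀ i, 0 ≤ u t i) ∧
    (∀ i, p t i ≤ resLiabVec α pbar p t i) ∧
    (∀ i, 0 ≤ netWorthVec A (fun s i => e s i + u s i) p (t + 1) i) ∧
    budget u t ≤ F t

/-- Cost `J([p],[u])` of the pro-rata control problem. -/
def costPro {n : ℕ} (T : ℕ) (α η γ : ℝ) (pbar : Fin n → ℝ)
    (p u : ℕ → Fin n → ℝ) : ℝ :=
  (1 - η) * ∑ t ∈ range T, ∑ i, (resLiabVec α pbar p t i - p t i)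
    + η * ∑ i, resLiabVec α pbar p T i
    + γ * budget u (T - 1)

/-- Optimality for the pro-rata control problem. -/
def OptimalPro {n : ℕ} (T : ℕ) (α η γ : ℝ) (pbar : Fin n → ℝ)
    (A : Matrix (Fin n) (Fin n) ℝ) (e : ℕ → Fin n → ℝ) (F : ℕ → ℝ)
    (p u : ℕ → Fin n → ℝ) : Prop :=
  FeasiblePro T α pbar A e F p u ∧
  ∀ p' u', FeasiblePro T α pbar A e F p' u' →
    costPro T α η γ pbar p u ≤ costPro T α η γ pbar p' u'

lemma sum_ite_eq_range (σ a : ℕ) (x : ℝ) :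
    ∑ k ∈ range σ, (if k = a then x else 0) = if a < σ then x else 0 := by
  simp [Finset.sum_ite_eq', Finset.mem_range]

lemma netWorth_closed {n : ℕ} (A : Matrix (Fin n) (Fin n) ℝ) (c p : ℕ → Fin n → ℝ)
    (σ : ℕ) (j : Fin n) :
    netWorthVec A c p σ j = ∑ k ∈ range σ, (c k j + (∑ m, A m j * p k m) - p k j) := by
  induction σ with
  | zero => simp [netWorthVec]
  | succ s ih =>
    rw [Finset.sum_range_succ, ← ih]
    show netWorthVec A c p s j + c s j + (∑ m, A m j * p s m) - p s j = _
    ring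

set_option maxHeartbeats 2000000 in
theorem stmt5_no_late_injection_prorata (n T : ℕ) (hn : 1 ≤ n) (hT : 1 ≤ T)
    (α : ℝ) (hα : 1 ≤ α)
    (Pbar : Matrix (Fin n) (Fin n) ℝ)
    (hPbar : ∀ i j, 0 ≤ Pbar i j) (hPdiag : ∀ i, Pbar i i = 0)
    (pbar : Fin n → ℝ) (hpbar : ∀ i, pbar i = ∑ j, Pbar i j)
    (A : Matrix (Fin n) (Fin n) ℝ) (hA : A = proRata Pbar)
    (e : ℕ → Fin n → ℝ) (he : ∀ t, t < T → ∀ i, 0 ≤ e t i)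
    (F : ℕ → ℝ) (hF : ∀ t, 0 ≤ F t) (hFmono : ∀ s t, s ≤ t → F s ≤ F t)
    (η γ : ℝ) (hη0 : 0 ≤ η) (hη1 : η < 1) (hγ : 0 < γ)
    (pstar ustar : ℕ → Fin n → ℝ)
    (hopt : OptimalPro T α η γ pbar A e F pstar ustar) :
    ∀ tstar, tstar + 1 < T → budget ustar tstar < F tstar →
      ∀ t, tstar < t → t < T → ∀ i, ustar t i = 0 := by
  obtain ⟨hfeas, hopt2⟩ := hopt
  intro tstar htsT hBs t
  induction t using Nat.strong_induction_on with
  | _ t IH =>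
  intro hts htT i
  by_contra hne
  have hα0 : (0:ℝ) < α := lt_of_lt_of_le one_pos hα
  have hδ : 0 < ustar t i := lt_of_le_of_ne ((hfeas t htT).2.1 i) (Ne.symm hne)
  have hAnn : ∀ a b, 0 ≤ A a b := by
    intro a b; rw [hA]; unfold proRata
    split_ifs with h1 h2
    · exact div_nonneg (hPbar a b) (le_of_lt h1)
    · norm_num
    · norm_num
  have hwnn : ∀ σ, σ ≤ T → ∀ j,
      0 ≤ netWorthVec A (fun s i => e s i + ustar s i) pstar σ j := by
    intro σ hσ j
    match σ, hσ with
    | 0, _ => simp [netWorthVec]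
    | (σ+1), hσ => exact (hfeas σ (by omega)).2.2.2.1 j
  have hinc : ∀ k, k < T → ∀ j, 0 ≤ ∑ m, A m j * pstar k m := by
    intro k hk j
    exact Finset.sum_nonneg fun m _ => mul_nonneg (hAnn m j) ((hfeas k hk).1 m)
  have hBconst : ∀ s, tstar ≤ s → s < t → budget ustar s = budget ustar tstar := by
    intro s hs1 hs2
    induction s with
    | zero => have : tstar = 0 := by omega
              rw [this]
    | succ s ih =>
      rcases Nat.lt_or_ge tstar (s+1) with h | h
      · have h1 : budget ustar (s+1) = budget ustar s + ∑ j, ustar (s+1) j := by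
          unfold budget; rw [Finset.sum_range_succ]
        have h2 : ∀ j, ustar (s+1) j = 0 := fun j => IH (s+1) hs2 (by omega) (by omega) j
        have h3 : ∑ j, ustar (s+1) j = 0 := by simp [h2]
        rw [h1, h3, add_zero, ih (by omega) (by omega)]
      · have : tstar = s + 1 := by omega
        rw [this]
  by_cases hq : ∃ σ, t ≤ σ ∧ σ < T ∧ pstar σ i ≠ 0
  · -- CASE B : the injected cash is spent; first payment time q
    classical
    obtain ⟨q, hQq, hqmin⟩ : ∃ q, (t ≤ q ∧ q < T ∧ pstar q i ≠ 0) ∧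
        ∀ σ, σ < q → ¬ (t ≤ σ ∧ σ < T ∧ pstar σ i ≠ 0) :=
      ⟨Nat.find hq, Nat.find_spec hq, fun σ h => Nat.find_min hq h⟩
    obtain ⟨htq, hqT, hpq0⟩ := hQq
    have hpq : 0 < pstar q i := lt_of_le_of_ne ((hfeas q hqT).1 i) (Ne.symm hpq0)
    have hp0 : ∀ σ, t ≤ σ → σ < q → pstar σ i = 0 := by
      intro σ h1 h2
      by_contra h
      exact (hqmin σ h2) ⟨h1, by omega, h⟩
    have htsq : tstar < q := by omega
    -- slack of the residual constraint on [tstar, q)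
    have hrp : ∀ σ, σ < T → pstar σ i ≤ resLiabVec α pbar pstar σ i :=
      fun σ h => (hfeas σ h).2.2.1 i
    have hslackr : ∀ σ, tstar ≤ σ → σ < q →
        pstar σ i < resLiabVec α pbar pstar σ i := by
      intro σ h1 h2
      rcases lt_or_eq_of_le (hrp σ (by omega)) with h | h
      · exact h
      · exfalso
        have hchain : ∀ ρ, σ < ρ → ρ ≤ q → resLiabVec α pbar pstar ρ i ≤ 0 := by
          intro ρ hρ1
          induction ρ, hρ1 using Nat.le_induction with
          | base =>
            intro _
            have h1' : resLiabVec α pbar pstar (σ+1) i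
                = α * (resLiabVec α pbar pstar σ i - pstar σ i) := rfl
            rw [h1', ← h]
            simp
          | succ ρ hρ ihρ =>
            intro hρq
            have h1' : resLiabVec α pbar pstar (ρ+1) i
                = α * (resLiabVec α pbar pstar ρ i - pstar ρ i) := rfl
            have h2' := ihρ (by omega)
            have h3' : 0 ≤ pstar ρ i := (hfeas ρ (by omega)).1 i
            rw [h1']
            nlinarith
        have h4' := hchain q (by omega) le_rfl
        have h5' := hrp q hqT
        linarith
    -- pbar i is positive
    have hrle : ∀ σ, σ ≤ q → resLiabVec α pbar pstar σ i ≤ α^σ * pbar i := by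
      intro σ
      induction σ with
      | zero => intro _; simp [resLiabVec]
      | succ σ ihσ =>
        intro hσ
        have h1' : resLiabVec α pbar pstar (σ+1) i
            = α * (resLiabVec α pbar pstar σ i - pstar σ i) := rfl
        have h2' := ihσ (by omega)
        have h3' : 0 ≤ pstar σ i := (hfeas σ (by omega)).1 i
        rw [h1', pow_succ]
        nlinarith
    have hpbarpos : 0 < pbar i := by
      by_contra h
      push_neg at h
      have h1' := hrle q le_rfl
      have h2' : α^q * pbar i ≤ 0 := mul_nonpos_of_nonneg_of_nonpos (pow_pos hα0 q).le h
      have h3' := hrp q hqT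
      linarith
    have hpbarsum : 0 < ∑ k, Pbar i k := by
      have := hpbar i
      rw [this] at hpbarpos
      exact hpbarpos
    have hAii : A i i = 0 := by
      rw [hA]; unfold proRata
      rw [if_pos hpbarsum, hPdiag, zero_div]
    have hArow : ∑ j, A i j = 1 := by
      rw [hA]; unfold proRata
      simp only [if_pos hpbarsum]
      rw [← Finset.sum_div, div_self (ne_of_gt hpbarsum)]
    -- choose the perturbation size
    have hε : 0 < F tstar - budget ustar tstar := by linarith
    have hne' : (Finset.Ico tstar q).Nonempty := ⟨tstar, by simp [Finset.mem_Ico]; omega⟩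
    set mS := (Finset.Ico tstar q).inf' hne'
        (fun σ => resLiabVec α pbar pstar σ i - pstar σ i) with hmS
    have hmSpos : 0 < mS := by
      rw [hmS, Finset.lt_inf'_iff]
      intro σ hσ
      rw [Finset.mem_Ico] at hσ
      exact sub_pos.mpr (hslackr σ hσ.1 hσ.2)
    have hmSle : ∀ σ, tstar ≤ σ → σ < q →
        mS ≤ resLiabVec α pbar pstar σ i - pstar σ i := by
      intro σ h1 h2
      exact Finset.inf'_le _ (by rw [Finset.mem_Ico]; exact ⟨h1, h2⟩)
    set μ := min (min (F tstar - budget ustar tstar) (ustar t i)) (min (pstar q i) mS)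
      with hμdef
    have hμpos : 0 < μ := lt_min (lt_min hε hδ) (lt_min hpq hmSpos)
    have hμε : μ ≤ F tstar - budget ustar tstar := le_trans (min_le_left _ _) (min_le_left _ _)
    have hμδ : μ ≤ ustar t i := le_trans (min_le_left _ _) (min_le_right _ _)
    have hμp : μ ≤ pstar q i := le_trans (min_le_right _ _) (min_le_left _ _)
    have hμS : μ ≤ mS := le_trans (min_le_right _ _) (min_le_right _ _)
    set M := α ^ (q - tstar) with hM
    have hMpos : 0 < M := pow_pos hα0 _
    have hM1 : 1 ≤ M := by
      rw [hM]
      calc (1:ℝ) = 1 ^ (q - tstar) := (one_pow _).symm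
        _ ≤ α ^ (q - tstar) := pow_le_pow_left₀ zero_le_one hα _
    set ν := μ / M with hν
    have hνpos : 0 < ν := div_pos hμpos hMpos
    have hMν : M * ν = μ := by
      rw [hν]; field_simp
    have hνμ : ν ≤ μ := by
      rw [hν]; exact div_le_self hμpos.le hM1
    set g := μ - ν with hg
    have hgnn : 0 ≤ g := sub_nonneg.mpr hνμ
    have hpow : ∀ σ, σ ≤ q → α ^ (σ - tstar) * ν ≤ μ := by
      intro σ h2
      have h3' : α ^ (σ - tstar) ≤ M := by
        rw [hM]
        exact pow_le_pow_right₀ hα (by omega)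
      calc α ^ (σ - tstar) * ν ≤ M * ν :=
            mul_le_mul_of_nonneg_right h3' hνpos.le
        _ = μ := hMν
    have hpownn : ∀ σ : ℕ, 0 ≤ α ^ (σ - tstar) * ν :=
      fun σ => mul_nonneg (pow_pos hα0 _).le hνpos.le
    -- the competitor process
    set p' : ℕ → Fin n → ℝ := fun s j => if j = i then
        (if s = tstar then pstar s j + ν else if s = q then pstar s j - μ else pstar s j)
      else pstar s j with hp'
    set u' : ℕ → Fin n → ℝ := fun s j => if s = tstar then
        ustar s j + (if j = i then ν else 0) + A i j * g
      else if s = t ∧ j = i then ustar s j - μ else ustar s j with hu'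
    have hp'i : ∀ s, p' s i = if s = tstar then pstar s i + ν
        else if s = q then pstar s i - μ else pstar s i := by
      intro s; simp [hp']
    have hp'j : ∀ s j, j ≠ i → p' s j = pstar s j := by
      intro s j hj; simp [hp', hj]
    have hp'sum : ∀ s, p' s i
        = pstar s i + ((if s = tstar then ν else 0) + (if s = q then -μ else 0)) := by
      intro s; rw [hp'i]
      by_cases s1 : s = tstar
      · rw [if_pos s1, if_pos s1, if_neg (show ¬ s = q by omega)]; ring
      · rw [if_neg s1, if_neg s1]
        by_cases s2 : s = q
        · rw [if_pos s2, if_pos s2]; ring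
        · rw [if_neg s2, if_neg s2]; ring
    -- residual liabilities of the competitor
    have hres' : ∀ σ j, resLiabVec α pbar p' σ j = resLiabVec α pbar pstar σ j
        - (if j = i ∧ tstar < σ ∧ σ ≤ q then α ^ (σ - tstar) * ν else 0) := by
      intro σ
      induction σ with
      | zero =>
        intro j
        have : ¬ (j = i ∧ tstar < 0 ∧ 0 ≤ q) := by omega
        rw [if_neg this]
        simp [resLiabVec]
      | succ σ ihσ =>
        intro j
        have hL : resLiabVec α pbar p' (σ+1) j = α * (resLiabVec α pbar p' σ j - p' σ j) := rfl
        have hR : resLiabVec α pbar pstar (σ+1) j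
            = α * (resLiabVec α pbar pstar σ j - pstar σ j) := rfl
        rw [hL, ihσ j, hR]
        by_cases hj : j = i
        · subst hj
          by_cases h1 : σ < tstar
          · have e1 : ¬ (j = j ∧ tstar < σ ∧ σ ≤ q) := by rintro ⟨-, h', -⟩; omega
            have e2 : ¬ (j = j ∧ tstar < σ + 1 ∧ σ + 1 ≤ q) := by rintro ⟨-, h', -⟩; omega
            have e3 : p' σ j = pstar σ j := by
              rw [hp'i, if_neg (by omega : ¬ σ = tstar), if_neg (by omega : ¬ σ = q)]
            rw [if_neg e1, if_neg e2, e3]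
            ring
          · by_cases h2 : σ = tstar
            · subst h2
              have e1 : ¬ (j = j ∧ σ < σ ∧ σ ≤ q) := by rintro ⟨-, h', -⟩; omega
              have e2 : (j = j ∧ σ < σ + 1 ∧ σ + 1 ≤ q) := ⟨rfl, by omega, by omega⟩
              have e3 : p' σ j = pstar σ j + ν := by rw [hp'i, if_pos rfl]
              have e4 : σ + 1 - σ = 1 := by omega
              rw [if_neg e1, if_pos e2, e3, e4, pow_one]
              ring
            · by_cases h3 : σ < q
              · have e1 : (j = j ∧ tstar < σ ∧ σ ≤ q) := ⟨rfl, by omega, by omega⟩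
                have e2 : (j = j ∧ tstar < σ + 1 ∧ σ + 1 ≤ q) := ⟨rfl, by omega, by omega⟩
                have e3 : p' σ j = pstar σ j := by
                  rw [hp'i, if_neg h2, if_neg (by omega : ¬ σ = q)]
                have e4 : σ + 1 - tstar = (σ - tstar) + 1 := by omega
                rw [if_pos e1, if_pos e2, e3, e4, pow_succ]
                ring
              · by_cases h4 : σ = q
                · subst h4
                  have e1 : (j = j ∧ tstar < σ ∧ σ ≤ σ) := ⟨rfl, by omega, le_rfl⟩
                  have e2 : ¬ (j = j ∧ tstar < σ + 1 ∧ σ + 1 ≤ σ) := by rintro ⟨-, -, h'⟩; omega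
                  have e3 : p' σ j = pstar σ j - μ := by
                    rw [hp'i, if_neg (by omega : ¬ σ = tstar), if_pos rfl]
                  have e5 : α ^ (σ - tstar) * ν = μ := by rw [← hM]; exact hMν
                  rw [if_pos e1, if_neg e2, e3, e5]
                  ring
                · have e1 : ¬ (j = j ∧ tstar < σ ∧ σ ≤ q) := by rintro ⟨-, -, h'⟩; omega
                  have e2 : ¬ (j = j ∧ tstar < σ + 1 ∧ σ + 1 ≤ q) := by rintro ⟨-, -, h'⟩; omega
                  have e3 : p' σ j = pstar σ j := by
                    rw [hp'i, if_neg h2, if_neg h4]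
                  rw [if_neg e1, if_neg e2, e3]
                  ring
        · have e1 : ¬ (j = i ∧ tstar < σ ∧ σ ≤ q) := by simp [hj]
          have e2 : ¬ (j = i ∧ tstar < σ + 1 ∧ σ + 1 ≤ q) := by simp [hj]
          rw [if_neg e1, if_neg e2, hp'j σ j hj]
          ring
    -- net worth of the competitor
    have hw' : ∀ σ j, netWorthVec A (fun s m => e s m + u' s m) p' σ j
        = netWorthVec A (fun s m => e s m + ustar s m) pstar σ j
          + (if j = i then (if t < σ ∧ σ ≤ q then -μ else 0)
             else (if tstar < σ ∧ σ ≤ q then A i j * μ else 0)) := by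
      intro σ j
      rw [netWorth_closed, netWorth_closed]
      have hterm : ∀ k, (e k j + u' k j + (∑ m, A m j * p' k m) - p' k j)
          = (e k j + ustar k j + (∑ m, A m j * pstar k m) - pstar k j)
            + ((if k = tstar then A i j * μ else 0)
               + (if k = t then (if j = i then -μ else 0) else 0)
               + (if k = q then (if j = i then μ else 0) - A i j * μ else 0)) := by
        intro k
        have hsum : ∑ m, A m j * p' k m
            = (∑ m, A m j * pstar k m) + A i j * (p' k i - pstar k i) := by
          have h1 : ∀ m : Fin n, A m j * p' k m
              = A m j * pstar k m + (if m = i then A i j * (p' k i - pstar k i) else 0) := by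
            intro m
            by_cases hm : m = i
            · subst hm; rw [if_pos rfl]; ring
            · rw [hp'j k m hm, if_neg hm]; ring
          rw [Finset.sum_congr rfl fun m _ => h1 m, Finset.sum_add_distrib]
          simp
        rw [hsum]
        have hdp : p' k i - pstar k i
            = (if k = tstar then ν else 0) + (if k = q then -μ else 0) := by
          rw [hp'i]
          by_cases k1 : k = tstar
          · rw [if_pos k1, if_pos k1, if_neg (show ¬ k = q by omega)]
            ring
          · rw [if_neg k1, if_neg k1]
            by_cases k3 : k = q
            · rw [if_pos k3, if_pos k3]; ring
            · rw [if_neg k3, if_neg k3]; ring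
        have hdu : u' k j = ustar k j
            + ((if k = tstar then (if j = i then ν else 0) + A i j * g else 0)
               + (if k = t then (if j = i then -μ else 0) else 0)) := by
          simp only [hu']
          by_cases k1 : k = tstar
          · rw [if_pos k1, if_pos k1, if_neg (show ¬ k = t by omega)]; ring
          · rw [if_neg k1, if_neg k1]
            by_cases k2 : k = t
            · by_cases hj : j = i
              · rw [if_pos ⟨k2, hj⟩, if_pos k2, if_pos hj]; ring
              · rw [if_neg (by tauto), if_pos k2, if_neg hj]; ring
            · rw [if_neg (by tauto), if_neg k2]; ring
        have hdpj : p' k j = pstar k j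
            + (if j = i then ((if k = tstar then ν else 0) + (if k = q then -μ else 0)) else 0) := by
          by_cases hj : j = i
          · rw [if_pos hj, hj]
            linear_combination hdp
          · rw [if_neg hj, hp'j k j hj]; ring
        rw [hdp, hdu, hdpj]
        by_cases hj : j = i
        · simp only [hj, hAii, hg]
          split_ifs <;> first | (exfalso; omega) | ring
        · simp only [if_neg hj, hg]
          split_ifs <;> first | (exfalso; omega) | ring
      rw [Finset.sum_congr rfl fun k _ => hterm k, Finset.sum_add_distrib,
        Finset.sum_add_distrib, Finset.sum_add_distrib, sum_ite_eq_range,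
        sum_ite_eq_range, sum_ite_eq_range]
      have hcomb : (if tstar < σ then A i j * μ else 0)
          + (if t < σ then (if j = i then -μ else 0) else 0)
          + (if q < σ then (if j = i then μ else 0) - A i j * μ else 0)
          = (if j = i then (if t < σ ∧ σ ≤ q then -μ else 0)
             else (if tstar < σ ∧ σ ≤ q then A i j * μ else 0)) := by
        by_cases hj : j = i
        · simp only [hj, hAii, zero_mul, if_pos rfl]
          split_ifs <;> first | (exfalso; omega) | ring
        · simp only [if_neg hj]
          split_ifs <;> first | (exfalso; omega) | ring
      linear_combination hcomb
    -- node i keeps at least the injected amount until its first payment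
    have hwbig : ∀ σ, t < σ → σ ≤ q →
        ustar t i ≤ netWorthVec A (fun s m => e s m + ustar s m) pstar σ i := by
      intro σ hσ1
      induction σ, hσ1 using Nat.le_induction with
      | base =>
        intro hσ2
        have hw : netWorthVec A (fun s m => e s m + ustar s m) pstar (t+1) i
            = netWorthVec A (fun s m => e s m + ustar s m) pstar t i
              + (e t i + ustar t i) + (∑ m, A m i * pstar t m) - pstar t i := rfl
        have hp0' : pstar t i = 0 := hp0 t le_rfl (by omega)
        have h1 := hwnn t (by omega) i
        have h2 := hinc t htT i
        have h3 := he t htT i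
        rw [hw, hp0']; linarith
      | succ σ hσ ihσ =>
        intro hσ2
        have hw : netWorthVec A (fun s m => e s m + ustar s m) pstar (σ+1) i
            = netWorthVec A (fun s m => e s m + ustar s m) pstar σ i
              + (e σ i + ustar σ i) + (∑ m, A m i * pstar σ m) - pstar σ i := rfl
        have hp0' : pstar σ i = 0 := hp0 σ (by omega) (by omega)
        have h2 := hinc σ (by omega) i
        have h3 := he σ (by omega) i
        have h4 := (hfeas σ (by omega)).2.1 i
        have h5 := ihσ (by omega)
        rw [hw, hp0']; linarith
    -- row sums of the modified injections
    have hrowu : ∀ k, ∑ j, u' k j = (∑ j, ustar k j)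
        + (if k = tstar then μ else 0) - (if k = t then μ else 0) := by
      intro k
      by_cases k1 : k = tstar
      · rw [if_pos k1, if_neg (show ¬ k = t by omega)]
        have h1 : ∀ j : Fin n, u' k j = ustar k j + (if j = i then ν else 0) + A i j * g := by
          intro j; simp only [hu', if_pos k1]
        rw [Finset.sum_congr rfl fun j _ => h1 j, Finset.sum_add_distrib,
          Finset.sum_add_distrib]
        have h2 : (∑ j : Fin n, if j = i then ν else 0) = ν := by simp
        have h3 : (∑ j : Fin n, A i j * g) = g := by
          rw [← Finset.sum_mul, hArow, one_mul]
        rw [h2, h3, hg]; ring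
      · rw [if_neg k1]
        by_cases k2 : k = t
        · rw [if_pos k2]
          have h1 : ∀ j : Fin n, u' k j = ustar k j + (if j = i then -μ else 0) := by
            intro j; simp only [hu', if_neg k1]
            by_cases hj : j = i
            · rw [if_pos ⟨k2, hj⟩, if_pos hj]; ring
            · rw [if_neg (by tauto), if_neg hj]; ring
          rw [Finset.sum_congr rfl fun j _ => h1 j, Finset.sum_add_distrib]
          have h2 : (∑ j : Fin n, if j = i then -μ else 0) = -μ := by simp
          rw [h2]; ring
        · rw [if_neg k2]
          have h1 : ∀ j : Fin n, u' k j = ustar k j := by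
            intro j; simp only [hu', if_neg k1, if_neg (show ¬ (k = t ∧ j = i) by tauto)]
          rw [Finset.sum_congr rfl fun j _ => h1 j]; ring
    have hbud : ∀ s, budget u' s = budget ustar s
        + (if tstar ≤ s then μ else 0) - (if t ≤ s then μ else 0) := by
      intro s
      unfold budget
      rw [Finset.sum_congr rfl fun k _ => hrowu k]
      have h1 : ∀ k : ℕ, (∑ j, ustar k j) + (if k = tstar then μ else 0) - (if k = t then μ else 0)
          = (∑ j, ustar k j) + ((if k = tstar then μ else 0) + (if k = t then -μ else 0)) := by
        intro k; split_ifs <;> ring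
      rw [Finset.sum_congr rfl fun k _ => h1 k, Finset.sum_add_distrib,
        Finset.sum_add_distrib, sum_ite_eq_range, sum_ite_eq_range]
      simp only [Nat.lt_succ_iff]
      split_ifs <;> ring
    -- feasibility of the competitor
    have hfeas' : FeasiblePro T α pbar A e F p' u' := by
      intro s hs
      refine ⟨?_, ?_, ?_, ?_, ?_⟩
      · intro j
        by_cases hj : j = i
        · rw [hj, hp'sum]
          have h1 := (hfeas s hs).1 i
          by_cases s1 : s = tstar
          · rw [if_pos s1, if_neg (show ¬ s = q by omega)]
            linarith
          · rw [if_neg s1]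
            by_cases s2 : s = q
            · subst s2
              rw [if_pos rfl]
              linarith [hμp]
            · rw [if_neg s2]
              linarith
        · rw [hp'j s j hj]
          exact (hfeas s hs).1 j
      · intro j
        by_cases s1 : s = tstar
        · simp only [hu', if_pos s1]
          have h1 := (hfeas s hs).2.1 j
          have h2 : 0 ≤ A i j * g := mul_nonneg (hAnn i j) hgnn
          split_ifs <;> linarith [hνpos]
        · by_cases s2 : s = t ∧ j = i
          · simp only [hu', if_neg s1, if_pos s2]
            rw [s2.1, s2.2]
            linarith [hμδ]
          · simp only [hu', if_neg s1, if_neg s2]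
            exact (hfeas s hs).2.1 j
      · intro j
        rw [hres' s j]
        by_cases hj : j = i
        · subst hj
          rw [hp'sum]
          simp only [true_and]
          have hle := (hfeas s hs).2.2.1 j
          by_cases s1 : s = tstar
          · rw [if_pos s1, if_neg (show ¬ s = q by omega),
              if_neg (show ¬ (tstar < s ∧ s ≤ q) by omega)]
            have h2 := hmSle tstar le_rfl htsq
            have h3 : pstar s j = pstar tstar j := by rw [s1]
            have h4 : resLiabVec α pbar pstar s j = resLiabVec α pbar pstar tstar j := by rw [s1]
            rw [h3, h4] at *
            linarith [hνμ, hμS, hmSle tstar le_rfl htsq]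
          · rw [if_neg s1]
            by_cases s2 : s = q
            · rw [if_pos s2, if_pos (show tstar < s ∧ s ≤ q by omega)]
              have e5 : α ^ (s - tstar) * ν = μ := by rw [s2, ← hM]; exact hMν
              rw [e5]
              linarith
            · rw [if_neg s2]
              by_cases s3 : tstar < s ∧ s ≤ q
              · rw [if_pos s3]
                have h2 := hpow s s3.2
                have h3 := hmSle s (by omega) (by omega)
                linarith [hμS]
              · rw [if_neg s3]
                linarith
        · rw [hp'j s j hj, if_neg (show ¬ (j = i ∧ tstar < s ∧ s ≤ q) by tauto)]
          have := (hfeas s hs).2.2.1 j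
          linarith
      · intro j
        rw [hw' (s+1) j]
        by_cases hj : j = i
        · rw [if_pos hj]
          by_cases hc : t < s + 1 ∧ s + 1 ≤ q
          · rw [if_pos hc, hj]
            have := hwbig (s+1) hc.1 hc.2
            linarith [hμδ]
          · rw [if_neg hc]
            have := hwnn (s+1) (by omega) j
            linarith
        · rw [if_neg hj]
          have h1 := hwnn (s+1) (by omega) j
          have h2 : 0 ≤ A i j * μ := mul_nonneg (hAnn i j) hμpos.le
          split_ifs <;> linarith
      · rw [hbud s]
        have h0 := (hfeas s hs).2.2.2.2
        by_cases c1 : t ≤ s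
        · rw [if_pos (show tstar ≤ s by omega), if_pos c1]
          linarith
        · rw [if_neg c1]
          by_cases c3 : tstar ≤ s
          · rw [if_pos c3]
            have h1 := hBconst s c3 (by omega)
            have h2 := hFmono tstar s c3
            linarith [hμε]
          · rw [if_neg c3]
            linarith
    -- strict cost comparison
    have hcost : costPro T α η γ pbar p' u' < costPro T α η γ pbar pstar ustar := by
      unfold costPro
      have hRsum : ∀ σ, (∑ j, (resLiabVec α pbar p' σ j - p' σ j))
          = (∑ j, (resLiabVec α pbar pstar σ j - pstar σ j))
            + (-(if tstar < σ ∧ σ ≤ q then α ^ (σ - tstar) * ν else 0)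
               - ((if σ = tstar then ν else 0) + (if σ = q then -μ else 0))) := by
        intro σ
        have h1 : ∀ j : Fin n, resLiabVec α pbar p' σ j - p' σ j
            = (resLiabVec α pbar pstar σ j - pstar σ j)
              + (if j = i then (-(if tstar < σ ∧ σ ≤ q then α ^ (σ - tstar) * ν else 0)
                  - ((if σ = tstar then ν else 0) + (if σ = q then -μ else 0))) else 0) := by
          intro j
          by_cases hj : j = i
          · subst hj
            rw [hres' σ j, hp'sum]
            simp only [eq_self_iff_true, true_and, if_true]
            ring
          · rw [hres' σ j, hp'j σ j hj, if_neg (show ¬ (j = i ∧ tstar < σ ∧ σ ≤ q) by tauto),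
              if_neg hj]
            ring
        rw [Finset.sum_congr rfl fun j _ => h1 j, Finset.sum_add_distrib]
        simp
      have hres'T : ∀ j, resLiabVec α pbar p' T j = resLiabVec α pbar pstar T j := by
        intro j
        rw [hres' T j, if_neg]
        · ring
        · rintro ⟨-, -, h'⟩; omega
      have hsum2 : (∑ j, resLiabVec α pbar p' T j) = ∑ j, resLiabVec α pbar pstar T j :=
        Finset.sum_congr rfl fun j _ => hres'T j
      have hbudT : budget u' (T-1) = budget ustar (T-1) := by
        rw [hbud (T-1), if_pos (show tstar ≤ T-1 by omega), if_pos (show t ≤ T-1 by omega)]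
        ring
      set S := ∑ σ ∈ range T, (if tstar < σ ∧ σ ≤ q then α ^ (σ - tstar) * ν else 0) with hS
      have hSge : μ ≤ S := by
        have h1 : ∀ σ ∈ range T, 0 ≤ (if tstar < σ ∧ σ ≤ q then α ^ (σ - tstar) * ν else 0) := by
          intro σ _
          split_ifs
          · exact hpownn σ
          · exact le_rfl
        have h2 := Finset.single_le_sum h1 (show q ∈ range T by simp [Finset.mem_range]; omega)
        rw [if_pos (show tstar < q ∧ q ≤ q from ⟨htsq, le_rfl⟩)] at h2
        have e5 : α ^ (q - tstar) * ν = μ := by rw [← hM]; exact hMν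
        rw [e5] at h2
        exact h2
      have hsum1 : (∑ σ ∈ range T, ∑ j, (resLiabVec α pbar p' σ j - p' σ j))
          = (∑ σ ∈ range T, ∑ j, (resLiabVec α pbar pstar σ j - pstar σ j)) + (μ - ν - S) := by
        rw [Finset.sum_congr rfl fun σ _ => hRsum σ, Finset.sum_add_distrib]
        have hh : ∀ σ : ℕ, (-(if tstar < σ ∧ σ ≤ q then α ^ (σ - tstar) * ν else 0)
            - ((if σ = tstar then ν else 0) + (if σ = q then -μ else 0)))
            = ((if σ = tstar then -ν else 0) + (if σ = q then μ else 0))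
              - (if tstar < σ ∧ σ ≤ q then α ^ (σ - tstar) * ν else 0) := by
          intro σ; split_ifs <;> ring
        rw [Finset.sum_congr rfl fun σ _ => hh σ, Finset.sum_sub_distrib,
          Finset.sum_add_distrib, sum_ite_eq_range, sum_ite_eq_range,
          if_pos (show tstar < T by omega), if_pos (show q < T by omega), ← hS]
        ring
      rw [hsum1, hsum2, hbudT]
      have h1η : (0:ℝ) < 1 - η := by linarith
      have hX : (1 - η) * ((∑ σ ∈ range T, ∑ j, (resLiabVec α pbar pstar σ j - pstar σ j)) + (μ - ν - S))
          = (1 - η) * (∑ σ ∈ range T, ∑ j, (resLiabVec α pbar pstar σ j - pstar σ j))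
            + (1 - η) * (μ - ν - S) := by ring
      rw [hX]
      have h2 : (1 - η) * (μ - ν - S) ≤ (1 - η) * (-ν) :=
        mul_le_mul_of_nonneg_left (by linarith) h1η.le
      have h3 : (1 - η) * (-ν) < 0 := by nlinarith
      linarith
    exact absurd (hopt2 p' u' hfeas') (not_le.mpr hcost)
  · -- CASE A : cash never spent, remove the injection
    push_neg at hq
    set u' : ℕ → Fin n → ℝ := fun s j => if s = t ∧ j = i then 0 else ustar s j with hu'
    have hrowu : ∀ k, ∑ j, u' k j = (∑ j, ustar k j) - (if k = t then ustar t i else 0) := by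
      intro k
      by_cases hk : k = t
      · subst hk
        have h1 : ∀ j : Fin n, u' k j = ustar k j - (if j = i then ustar k i else 0) := by
          intro j; by_cases hj : j = i <;> simp [hu', hj]
        rw [Finset.sum_congr rfl fun j _ => h1 j, Finset.sum_sub_distrib]
        simp
      · simp [hu', hk]
    have hcw : ∀ σ j, netWorthVec A (fun s m => e s m + u' s m) pstar σ j
        = netWorthVec A (fun s m => e s m + ustar s m) pstar σ j
          - (if j = i ∧ t < σ then ustar t i else 0) := by
      intro σ j
      rw [netWorth_closed, netWorth_closed]
      have hterm : ∀ k, (e k j + u' k j + (∑ m, A m j * pstar k m) - pstar k j)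
          = (e k j + ustar k j + (∑ m, A m j * pstar k m) - pstar k j)
            + (if k = t then (if j = i then -(ustar t i) else 0) else 0) := by
        intro k
        by_cases hk : k = t <;> by_cases hj : j = i <;> simp [hu', hk, hj] <;> ring
      rw [Finset.sum_congr rfl fun k _ => hterm k, Finset.sum_add_distrib, sum_ite_eq_range]
      by_cases hj : j = i <;> by_cases hσ : t < σ <;> simp [hj, hσ] <;> ring
    have hwbig : ∀ σ, t < σ → σ ≤ T →
        ustar t i ≤ netWorthVec A (fun s m => e s m + ustar s m) pstar σ i := by
      intro σ hσ1
      induction σ, hσ1 using Nat.le_induction with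
      | base =>
        intro hσ2
        have hw : netWorthVec A (fun s m => e s m + ustar s m) pstar (t+1) i
            = netWorthVec A (fun s m => e s m + ustar s m) pstar t i
              + (e t i + ustar t i) + (∑ m, A m i * pstar t m) - pstar t i := rfl
        have hp0 : pstar t i = 0 := hq t le_rfl htT
        have h1 := hwnn t (by omega) i
        have h2 := hinc t htT i
        have h3 := he t htT i
        rw [hw, hp0]; linarith
      | succ σ hσ ihσ =>
        intro hσ2
        have hw : netWorthVec A (fun s m => e s m + ustar s m) pstar (σ+1) i
            = netWorthVec A (fun s m => e s m + ustar s m) pstar σ i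
              + (e σ i + ustar σ i) + (∑ m, A m i * pstar σ m) - pstar σ i := rfl
        have hp0 : pstar σ i = 0 := hq σ (by omega) (by omega)
        have h2 := hinc σ (by omega) i
        have h3 := he σ (by omega) i
        have h4 := (hfeas σ (by omega)).2.1 i
        have h5 := ihσ (by omega)
        rw [hw, hp0]; linarith
    have hfeas' : FeasiblePro T α pbar A e F pstar u' := by
      intro s hs
      refine ⟨(hfeas s hs).1, ?_, (hfeas s hs).2.2.1, ?_, ?_⟩
      · intro j
        by_cases hk : s = t ∧ j = i
        · simp [hu', hk]
        · simp only [hu', if_neg hk]; exact (hfeas s hs).2.1 j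
      · intro j
        rw [hcw]
        by_cases hj : j = i ∧ t < s + 1
        · rw [if_pos hj]
          have := hwbig (s+1) hj.2 (by omega)
          rw [hj.1]; linarith
        · rw [if_neg hj]
          have := (hfeas s hs).2.2.2.1 j
          linarith
      · have hb : budget u' s = budget ustar s - (if t ≤ s then ustar t i else 0) := by
          unfold budget
          rw [Finset.sum_congr rfl fun k _ => hrowu k, Finset.sum_sub_distrib,
            sum_ite_eq_range]
          congr 1
          simp [Nat.lt_succ_iff]
        rw [hb]
        have h1 := (hfeas s hs).2.2.2.2
        split_ifs <;> linarith
    have hcost : costPro T α η γ pbar pstar u' < costPro T α η γ pbar pstar ustar := by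
      unfold costPro
      have hb : budget u' (T-1) = budget ustar (T-1) - ustar t i := by
        unfold budget
        rw [Finset.sum_congr rfl fun k _ => hrowu k, Finset.sum_sub_distrib,
          sum_ite_eq_range]
        have : t < T - 1 + 1 := by omega
        rw [if_pos this]
      rw [hb]
      have h2 : γ * (budget ustar (T-1) - ustar t i) < γ * budget ustar (T-1) := by
        have := mul_pos hγ hδ
        nlinarith
      linarith
    exact absurd (hopt2 pstar u' hfeas') (not_le.mpr hcost)
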